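/- Let n ≥ 2 and let ρ be an n-qubit density matrix, i.e. a Hermitian positive-semidefinite matrix of trace 1 indexed by (Fin n → Fin 2). Let R be its generalized R-matrix, the real 3^{n-1} × 3 matrix with entries R(I, j) = Re Tr(ρ · σ_{i₁}⊗⋯⊗σ_{i_{n-1}}⊗σ_j) for multi-indices I = (i₁,…,i_{n-1}) ∈ {1,2,3}^{n-1} and j ∈ {1,2,3}, and let u₁² ≥ u₂² ≥ u₃² denote the three eigenvalues of the positive-semidefinite 3×3 matrix RᵀR. Then for every n-qubit Bell operator B_n, one has Re Tr(ρ · B_n) ≤ 2√(u₁² + u₂²). -/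

import Mathlib

open Matrix Complex Polynomial
open scoped ComplexOrder

noncomputable section

/-- The three Pauli matrices σ_x, σ_y, σ_z. -/
def pauli : Fin 3 → Matrix (Fin 2) (Fin 2) ℂ :=
  ![!![0, 1; 1, 0], !![0, -Complex.I; Complex.I, 0], !![1, 0; 0, -1]]

/-- Kronecker product of `n` 2×2 matrices, as a matrix on `(Fin n → Fin 2)`. -/
def kron {n : ℕ} (M : Fin n → Matrix (Fin 2) (Fin 2) ℂ) :
    Matrix (Fin n → Fin 2) (Fin n → Fin 2) ℂ :=
  Matrix.of fun f g => ∏ k, M k (f k) (g k)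

/-- The operator a¹σ_x + a²σ_y + a³σ_z associated to a vector a ∈ ℝ³. -/
def opOf (a : Fin 3 → ℝ) : Matrix (Fin 2) (Fin 2) ℂ :=
  ∑ i, (a i : ℂ) • pauli i

/-- `B` is an `n`-qubit Bell operator:
`B = A₁⊗⋯⊗A_{n-1}⊗(A_n + A_n′) + A₁′⊗⋯⊗A_{n-1}′⊗(A_n − A_n′)`
for unit vectors `a k`, `a' k` in ℝ³. -/
def IsBellOp (n : ℕ) (B : Matrix (Fin n → Fin 2) (Fin n → Fin 2) ℂ) : Prop :=
  ∃ a a' : Fin n → Fin 3 → ℝ,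
    (∀ k, ∑ i, (a k i) ^ 2 = 1) ∧ (∀ k, ∑ i, (a' k i) ^ 2 = 1) ∧
    B = kron (fun k => if (k : ℕ) = n - 1 then opOf (a k) + opOf (a' k) else opOf (a k))
      + kron (fun k => if (k : ℕ) = n - 1 then opOf (a k) - opOf (a' k) else opOf (a' k))

/-- The generalized R-matrix of an `n`-qubit density matrix:
`R(I, j) = Re Tr(ρ · σ_{i₁}⊗⋯⊗σ_{i_{n-1}}⊗σ_j)`. -/
def Rmat {n : ℕ} (ρ : Matrix (Fin n → Fin 2) (Fin n → Fin 2) ℂ)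
    (I : Fin (n - 1) → Fin 3) (j : Fin 3) : ℝ :=
  (Matrix.trace (ρ * kron fun k =>
    if h : (k : ℕ) < n - 1 then pauli (I ⟨k, h⟩) else pauli j)).re

/-- The 3×3 matrix `RᵀR` built from the generalized R-matrix. -/
def RtR {n : ℕ} (ρ : Matrix (Fin n → Fin 2) (Fin n → Fin 2) ℂ) :
    Matrix (Fin 3) (Fin 3) ℝ :=
  Matrix.of fun j j' => ∑ I : Fin (n - 1) → Fin 3, Rmat ρ I j * Rmat ρ I j'

lemma eval_charpoly' {N : Type*} [Fintype N] [DecidableEq N]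
    (M : Matrix N N ℝ) (t : ℝ) : M.charpoly.eval t = det (t • (1 : Matrix N N ℝ) - M) := by
  rw [Matrix.charpoly, ← Polynomial.coe_evalRingHom, RingHom.map_det]
  congr 1
  ext i j
  by_cases h : i = j <;>
    simp [h, charmatrix_apply, Matrix.one_apply, Matrix.sub_apply, Matrix.smul_apply]

lemma root_has_eigvec {N : Type*} [Fintype N] [DecidableEq N]
    (M : Matrix N N ℝ) (t : ℝ) (h : M.charpoly.eval t = 0) :
    ∃ v : N → ℝ, v ≠ 0 ∧ M *ᵥ v = t • v := by
  rw [eval_charpoly'] at h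
  obtain ⟨v, hv, hv0⟩ := (Matrix.exists_mulVec_eq_zero_iff).2 h
  refine ⟨v, hv, ?_⟩
  have := sub_mulVec (t • (1 : Matrix N N ℝ)) M v
  rw [hv0] at this
  have h2 : (t • (1 : Matrix N N ℝ)) *ᵥ v = t • v := by
    simp [Matrix.smul_mulVec]
  rw [h2] at this
  rw [eq_comm, sub_eq_zero] at this
  exact this.symm

lemma dot_pos {N : Type*} [Fintype N] {v : N → ℝ} (hv : v ≠ 0) : 0 < v ⬝ᵥ v := by
  rcases Function.ne_iff.1 hv with ⟨i, hi⟩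
  have : (0:ℝ) < v i * v i := mul_self_pos.2 hi
  calc (0:ℝ) < v i * v i := this
    _ ≤ ∑ j, v j * v j := Finset.single_le_sum (f := fun j => v j * v j)
        (fun j _ => mul_self_nonneg _) (Finset.mem_univ i)

lemma bessel3 (a b c a' b' c' : ℝ) (h1 : a^2 + b^2 + c^2 = 1) (h2 : a'^2 + b'^2 + c'^2 = 1)
    (h3 : a*a' + b*b' + c*c' = 0) : a^2 + a'^2 ≤ 1 := by
  have h4 : (b*b' + c*c')^2 ≤ (b^2 + c^2) * (b'^2 + c'^2) := by
    nlinarith [sq_nonneg (b*c' - c*b')]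
  have h5 : b*b' + c*c' = -(a*a') := by linarith
  have h6 : b^2 + c^2 = 1 - a^2 := by linarith
  have h7 : b'^2 + c'^2 = 1 - a'^2 := by linarith
  rw [h5, h6, h7] at h4
  nlinarith [h4]

lemma subkey (lam : Fin 3 → ℝ) (u₁ u₂ u₃ : ℝ)
    (hl3 : ∀ i, u₃ ≤ lam i) (hsuml : lam 0 + lam 1 + lam 2 = u₁ + u₂ + u₃)
    (d e : Fin 3 → ℝ) (hd : (∑ i, d i ^ 2) = 1) (he : (∑ i, e i ^ 2) = 1)
    (hde : (∑ i, d i * e i) = 0) :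
    (∑ i, lam i * d i ^ 2) + (∑ i, lam i * e i ^ 2) ≤ u₁ + u₂ := by
  rw [Fin.sum_univ_three] at hd he hde ⊢
  rw [Fin.sum_univ_three]
  have hp0 : d 0 ^ 2 + e 0 ^ 2 ≤ 1 := bessel3 _ _ _ _ _ _ hd he hde
  have hp1 : d 1 ^ 2 + e 1 ^ 2 ≤ 1 :=
    bessel3 (d 1) (d 0) (d 2) (e 1) (e 0) (e 2) (by linarith) (by linarith) (by linarith)
  have hp2 : d 2 ^ 2 + e 2 ^ 2 ≤ 1 :=
    bessel3 (d 2) (d 0) (d 1) (e 2) (e 0) (e 1) (by linarith) (by linarith) (by linarith)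
  have k0 : 0 ≤ (lam 0 - u₃) * (1 - (d 0 ^ 2 + e 0 ^ 2)) :=
    mul_nonneg (by linarith [hl3 0]) (by linarith)
  have k1 : 0 ≤ (lam 1 - u₃) * (1 - (d 1 ^ 2 + e 1 ^ 2)) :=
    mul_nonneg (by linarith [hl3 1]) (by linarith)
  have k2 : 0 ≤ (lam 2 - u₃) * (1 - (d 2 ^ 2 + e 2 ^ 2)) :=
    mul_nonneg (by linarith [hl3 2]) (by linarith)
  have m1 : u₃ * (d 0 ^ 2 + d 1 ^ 2 + d 2 ^ 2) = u₃ * 1 := by rw [hd]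
  have m2 : u₃ * (e 0 ^ 2 + e 1 ^ 2 + e 2 ^ 2) = u₃ * 1 := by rw [he]
  nlinarith [k0, k1, k2, m1, m2]

lemma sqrt_cs {p q α β : ℝ} (hp : 0 ≤ p) (hq : 0 ≤ q) (hα : 0 ≤ α) (hβ : 0 ≤ β) :
    Real.sqrt p * Real.sqrt α + Real.sqrt q * Real.sqrt β
      ≤ Real.sqrt (p + q) * Real.sqrt (α + β) := by
  have h1 : (Real.sqrt p * Real.sqrt α + Real.sqrt q * Real.sqrt β) ^ 2
      ≤ (p + q) * (α + β) := by
    have e1 : Real.sqrt p ^ 2 = p := Real.sq_sqrt hp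
    have e2 : Real.sqrt q ^ 2 = q := Real.sq_sqrt hq
    have e3 : Real.sqrt α ^ 2 = α := Real.sq_sqrt hα
    have e4 : Real.sqrt β ^ 2 = β := Real.sq_sqrt hβ
    nlinarith [sq_nonneg (Real.sqrt p * Real.sqrt β - Real.sqrt q * Real.sqrt α)]
  calc Real.sqrt p * Real.sqrt α + Real.sqrt q * Real.sqrt β
      = Real.sqrt ((Real.sqrt p * Real.sqrt α + Real.sqrt q * Real.sqrt β) ^ 2) := by
        rw [Real.sqrt_sq (by positivity)]
    _ ≤ Real.sqrt ((p + q) * (α + β)) := Real.sqrt_le_sqrt h1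
    _ = _ := Real.sqrt_mul (by linarith) _

lemma key (M : Matrix (Fin 3) (Fin 3) ℝ)
    (hsym : M.IsHermitian) (hpsd : ∀ c : Fin 3 → ℝ, 0 ≤ c ⬝ᵥ (M *ᵥ c))
    (u₁ u₂ u₃ : ℝ) (h12 : u₂ ≤ u₁) (h23 : u₃ ≤ u₂)
    (hchar : M.charpoly = (X - C u₁) * (X - C u₂) * (X - C u₃))
    (x y : Fin 3 → ℝ) (hxy : x ⬝ᵥ y = 0) (hnorm : x ⬝ᵥ x + y ⬝ᵥ y = 4) :
    Real.sqrt (x ⬝ᵥ (M *ᵥ x)) + Real.sqrt (y ⬝ᵥ (M *ᵥ y))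
      ≤ 2 * Real.sqrt (u₁ + u₂) := by
  -- all roots of the characteristic polynomial are nonneg
  have hroot_nonneg : ∀ t : ℝ, M.charpoly.eval t = 0 → 0 ≤ t := by
    intro t ht
    obtain ⟨v, hv, hev⟩ := root_has_eigvec M t ht
    have h1 : v ⬝ᵥ (M *ᵥ v) = t * (v ⬝ᵥ v) := by rw [hev, dotProduct_smul, smul_eq_mul]
    have h2 := hpsd v
    rw [h1] at h2
    nlinarith [dot_pos hv]
  have hu3 : 0 ≤ u₃ := by
    apply hroot_nonneg
    rw [hchar]; simp
  have hu2 : 0 ≤ u₂ := le_trans hu3 h23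
  have hu1 : 0 ≤ u₁ := le_trans hu2 h12
  -- eigen machinery
  set U : Matrix (Fin 3) (Fin 3) ℝ := (hsym.eigenvectorUnitary : Matrix (Fin 3) (Fin 3) ℝ)
    with hU
  set lam := hsym.eigenvalues with hlam
  have hUU : U * Uᵀ = 1 := by
    have := (Matrix.mem_unitaryGroup_iff).mp (hsym.eigenvectorUnitary).2
    simpa [hU, Matrix.star_eq_conjTranspose, Matrix.conjTranspose_eq_transpose_of_trivial]
      using this
  have hUU' : Uᵀ * U = 1 := by
    have := (Matrix.mem_unitaryGroup_iff').mp (hsym.eigenvectorUnitary).2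
    simpa [hU, Matrix.star_eq_conjTranspose, Matrix.conjTranspose_eq_transpose_of_trivial]
      using this
  have hspec : M = U * Matrix.diagonal lam * Uᵀ := by
    have := hsym.spectral_theorem
    simpa [hU, hlam, Matrix.star_eq_conjTranspose,
      Matrix.conjTranspose_eq_transpose_of_trivial, Function.comp] using this
  -- quadratic form in eigencoordinates
  have hform : ∀ c : Fin 3 → ℝ, c ⬝ᵥ (M *ᵥ c) = ∑ i, lam i * (Uᵀ *ᵥ c) i ^ 2 := by
    intro c
    rw [hspec]
    rw [← Matrix.mulVec_mulVec, ← Matrix.mulVec_mulVec]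
    rw [Matrix.dotProduct_mulVec c U, ← Matrix.mulVec_transpose]
    simp only [Matrix.mulVec_diagonal, dotProduct]
    exact Finset.sum_congr rfl fun i _ => by ring
  -- transpose preserves dot products
  have hdot : ∀ c c' : Fin 3 → ℝ, (Uᵀ *ᵥ c) ⬝ᵥ (Uᵀ *ᵥ c') = c ⬝ᵥ c' := by
    intro c c'
    rw [Matrix.mulVec_transpose, ← Matrix.dotProduct_mulVec, Matrix.mulVec_mulVec, hUU,
      Matrix.one_mulVec]
  -- each eigenvalue is a root of the characteristic polynomial
  have heig_root : ∀ i, M.charpoly.eval (lam i) = 0 := by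
    intro i
    rw [eval_charpoly']
    apply (Matrix.exists_mulVec_eq_zero_iff).1
    refine ⟨⇑(hsym.eigenvectorBasis i), (not_congr (WithLp.ofLp_eq_zero 2)).mpr (hsym.eigenvectorBasis.orthonormal.ne_zero i), ?_⟩
    rw [sub_mulVec, Matrix.smul_mulVec, Matrix.one_mulVec, hsym.mulVec_eigenvectorBasis]
    simp [hlam]
  have hmem : ∀ i, lam i = u₁ ∨ lam i = u₂ ∨ lam i = u₃ := by
    intro i
    have := heig_root i
    rw [hchar] at this
    simp only [eval_mul, eval_sub, eval_X, eval_C, mul_eq_zero, sub_eq_zero] at this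
    tauto
  have hl1 : ∀ i, lam i ≤ u₁ := fun i => by rcases hmem i with h|h|h <;> linarith
  have hl3 : ∀ i, u₃ ≤ lam i := fun i => by rcases hmem i with h|h|h <;> linarith
  -- trace identity
  have htr1 : M.trace = ∑ i, lam i := by
    rw [hspec, Matrix.trace_mul_cycle]
    rw [hUU', Matrix.one_mul, Matrix.trace_diagonal]
  have htr2 : M.trace = u₁ + u₂ + u₃ := by
    have h := Matrix.trace_eq_neg_charpoly_coeff M
    rw [hchar] at h
    have hexp : (X - C u₁) * (X - C u₂) * (X - C u₃)
        = X ^ 3 - C (u₁ + u₂ + u₃) * X ^ 2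
          + C (u₁ * u₂ + u₁ * u₃ + u₂ * u₃) * X - C (u₁ * u₂ * u₃) := by
      simp only [C_add, C_mul]
      ring
    rw [hexp] at h
    simp only [Fintype.card_fin] at h
    rw [h]
    simp [coeff_X_pow, coeff_C, add_mul, coeff_C_mul]
  have hsuml : lam 0 + lam 1 + lam 2 = u₁ + u₂ + u₃ := by
    have := htr1.symm.trans htr2
    rwa [Fin.sum_univ_three] at this
  -- now make everything opaque
  set d := Uᵀ *ᵥ x with hdd
  set e := Uᵀ *ᵥ y with hee
  have hformx : x ⬝ᵥ (M *ᵥ x) = ∑ i, lam i * d i ^ 2 := hform x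
  have hformy : y ⬝ᵥ (M *ᵥ y) = ∑ i, lam i * e i ^ 2 := hform y
  have hdx : (∑ i, d i ^ 2) = x ⬝ᵥ x := by
    have := hdot x x
    rw [dotProduct] at this
    rw [← this]
    exact Finset.sum_congr rfl fun i _ => by rw [← hdd]; ring
  have hdy : (∑ i, e i ^ 2) = y ⬝ᵥ y := by
    have := hdot y y
    rw [dotProduct] at this
    rw [← this]
    exact Finset.sum_congr rfl fun i _ => by rw [← hee]; ring
  have hdxy : (∑ i, d i * e i) = 0 := by
    have := hdot x y
    rw [dotProduct] at this
    rw [this, hxy]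
  set A := x ⬝ᵥ (M *ᵥ x) with hA
  set B := y ⬝ᵥ (M *ᵥ y) with hB
  set p2 := x ⬝ᵥ x with hp2
  set q2 := y ⬝ᵥ y with hq2
  have hA0 : 0 ≤ A := hpsd x
  have hB0 : 0 ≤ B := hpsd y
  clear_value A B p2 q2 d e lam U
  clear hform hdot heig_root hmem htr1 htr2 hroot_nonneg hchar hspec hUU hUU' hU hlam hdd hee
    hpsd hsym hxy
  -- pure arithmetic from here on
  have hp2nn : (0:ℝ) ≤ p2 := by rw [← hdx]; positivity
  have hq2nn : (0:ℝ) ≤ q2 := by rw [← hdy]; positivity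
  have hAle : A ≤ u₁ * p2 := by
    rw [hformx, ← hdx, Finset.mul_sum]
    exact Finset.sum_le_sum fun i _ => mul_le_mul_of_nonneg_right (hl1 i) (sq_nonneg _)
  have hBle : B ≤ u₁ * q2 := by
    rw [hformy, ← hdy, Finset.mul_sum]
    exact Finset.sum_le_sum fun i _ => mul_le_mul_of_nonneg_right (hl1 i) (sq_nonneg _)
  have h2sqrt : Real.sqrt (4 * (u₁ + u₂)) = 2 * Real.sqrt (u₁ + u₂) := by
    rw [show (4:ℝ) = 2^2 by norm_num, Real.sqrt_mul (by positivity), Real.sqrt_sq (by norm_num)]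
  rcases eq_or_lt_of_le hp2nn with hp0 | hppos
  · have hxA : A = 0 := le_antisymm (by rw [← hp0] at hAle; linarith) hA0
    have : B ≤ 4 * (u₁ + u₂) := by nlinarith
    calc Real.sqrt A + Real.sqrt B = Real.sqrt B := by rw [hxA, Real.sqrt_zero, zero_add]
      _ ≤ Real.sqrt (4 * (u₁ + u₂)) := Real.sqrt_le_sqrt this
      _ = 2 * Real.sqrt (u₁ + u₂) := h2sqrt
  rcases eq_or_lt_of_le hq2nn with hq0 | hqpos
  · have hyB : B = 0 := le_antisymm (by rw [← hq0] at hBle; linarith) hB0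
    have : A ≤ 4 * (u₁ + u₂) := by nlinarith
    calc Real.sqrt A + Real.sqrt B = Real.sqrt A := by rw [hyB, Real.sqrt_zero, add_zero]
      _ ≤ Real.sqrt (4 * (u₁ + u₂)) := Real.sqrt_le_sqrt this
      _ = 2 * Real.sqrt (u₁ + u₂) := h2sqrt
  -- main case
  have hsp : Real.sqrt p2 > 0 := Real.sqrt_pos.2 hppos
  have hsq : Real.sqrt q2 > 0 := Real.sqrt_pos.2 hqpos
  have hsp2 : Real.sqrt p2 ^ 2 = p2 := Real.sq_sqrt hp2nn
  have hsq2 : Real.sqrt q2 ^ 2 = q2 := Real.sq_sqrt hq2nn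
  have happ := subkey lam u₁ u₂ u₃ hl3 hsuml
    (fun i => (Real.sqrt p2)⁻¹ * d i) (fun i => (Real.sqrt q2)⁻¹ * e i)
    (by
      simp only [mul_pow]
      rw [← Finset.mul_sum, hdx, ← hsp2]
      field_simp
      rw [Real.sqrt_sq (Real.sqrt_nonneg _)])
    (by
      simp only [mul_pow]
      rw [← Finset.mul_sum, hdy, ← hsq2]
      field_simp
      rw [Real.sqrt_sq (Real.sqrt_nonneg _)])
    (by
      have : ∀ i, (Real.sqrt p2)⁻¹ * d i * ((Real.sqrt q2)⁻¹ * e i)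
          = (Real.sqrt p2)⁻¹ * (Real.sqrt q2)⁻¹ * (d i * e i) := fun i => by ring
      simp only [this]
      rw [← Finset.mul_sum, hdxy, mul_zero])
  set α := ∑ i, lam i * ((Real.sqrt p2)⁻¹ * d i) ^ 2 with hαdef
  set β := ∑ i, lam i * ((Real.sqrt q2)⁻¹ * e i) ^ 2 with hβdef
  have hαA : A = p2 * α := by
    rw [hformx, hαdef, Finset.mul_sum]
    refine Finset.sum_congr rfl fun i _ => ?_
    rw [mul_pow, ← hsp2]
    field_simp
    rw [Real.sqrt_sq (Real.sqrt_nonneg _)]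
  have hβB : B = q2 * β := by
    rw [hformy, hβdef, Finset.mul_sum]
    refine Finset.sum_congr rfl fun i _ => ?_
    rw [mul_pow, ← hsq2]
    field_simp
    rw [Real.sqrt_sq (Real.sqrt_nonneg _)]
  have hα0 : 0 ≤ α := by
    rw [hαA] at hA0
    exact nonneg_of_mul_nonneg_right (by linarith) hppos
  have hβ0 : 0 ≤ β := by
    rw [hβB] at hB0
    exact nonneg_of_mul_nonneg_right (by linarith) hqpos
  have hsA : Real.sqrt A = Real.sqrt p2 * Real.sqrt α := by
    rw [hαA, Real.sqrt_mul hp2nn]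
  have hsB : Real.sqrt B = Real.sqrt q2 * Real.sqrt β := by
    rw [hβB, Real.sqrt_mul hq2nn]
  rw [hsA, hsB]
  calc Real.sqrt p2 * Real.sqrt α + Real.sqrt q2 * Real.sqrt β
      ≤ Real.sqrt (p2 + q2) * Real.sqrt (α + β) := sqrt_cs hp2nn hq2nn hα0 hβ0
    _ ≤ Real.sqrt 4 * Real.sqrt (u₁ + u₂) := by
        rw [hnorm]
        exact mul_le_mul_of_nonneg_left (Real.sqrt_le_sqrt happ) (Real.sqrt_nonneg _)
    _ = 2 * Real.sqrt (u₁ + u₂) := by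
        rw [show (4:ℝ) = 2^2 by norm_num, Real.sqrt_sq (by norm_num)]

lemma kron_opOf_expand {N : ℕ} (b : Fin N → Fin 3 → ℝ) :
    kron (fun k => opOf (b k))
      = ∑ I : Fin N → Fin 3, (∏ k, (b k (I k) : ℂ)) • kron (fun k => pauli (I k)) := by
  ext f g
  simp only [kron, Matrix.of_apply, Matrix.sum_apply, Matrix.smul_apply, smul_eq_mul]
  have h1 : ∀ k : Fin N, opOf (b k) (f k) (g k) = ∑ i, (b k i : ℂ) * pauli i (f k) (g k) := by
    intro k
    simp [opOf, Matrix.sum_apply, Matrix.smul_apply]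
  rw [Finset.prod_congr rfl fun k _ => h1 k]
  rw [Finset.prod_univ_sum]
  refine Finset.sum_congr (by simp) fun I _ => ?_
  rw [Finset.prod_mul_distrib]

lemma opOf_add (x y : Fin 3 → ℝ) : opOf (x + y) = opOf x + opOf y := by
  simp only [opOf, Pi.add_apply, Complex.ofReal_add, add_smul, Finset.sum_add_distrib]

lemma opOf_sub (x y : Fin 3 → ℝ) : opOf (x - y) = opOf x - opOf y := by
  simp only [opOf, Pi.sub_apply, Complex.ofReal_sub, sub_smul, Finset.sum_sub_distrib]

lemma Complex.ofReal_mul_re' (r : ℝ) (z : ℂ) : ((r : ℂ) * z).re = r * z.re := by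
  simp [Complex.mul_re]

-- trace expansion

lemma trace_expand {N : ℕ} (ρ : Matrix (Fin N → Fin 2) (Fin N → Fin 2) ℂ)
    (b : Fin N → Fin 3 → ℝ) :
    (Matrix.trace (ρ * kron (fun k => opOf (b k)))).re
      = ∑ I : Fin N → Fin 3, (∏ k, b k (I k))
          * (Matrix.trace (ρ * kron (fun k => pauli (I k)))).re := by
  rw [kron_opOf_expand, Finset.mul_sum, Matrix.trace_sum, Complex.re_sum]
  refine Finset.sum_congr rfl fun I _ => ?_
  rw [Matrix.mul_smul, Matrix.trace_smul]
  have : (∏ k, (b k (I k) : ℂ)) = ((∏ k, b k (I k) : ℝ) : ℂ) := by push_cast; rfl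
  rw [smul_eq_mul, this, Complex.ofReal_mul_re']

lemma sum_snoc_split (m : ℕ) (F : (Fin (m+1) → Fin 3) → ℝ) :
    ∑ I : Fin (m+1) → Fin 3, F I
      = ∑ J : Fin m → Fin 3, ∑ j : Fin 3, F (Fin.snoc J j) := by
  rw [← (Fin.snocEquiv (fun _ => Fin 3)).sum_comp F]
  rw [Fintype.sum_prod_type]
  rw [Finset.sum_comm]
  rfl

lemma S_eq (m : ℕ) (ρ : Matrix (Fin (m+1) → Fin 2) (Fin (m+1) → Fin 2) ℂ)
    (I : Fin (m+1) → Fin 3) :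
    (Matrix.trace (ρ * kron fun k => pauli (I k))).re
      = Rmat ρ (fun i : Fin m => I i.castSucc) (I (Fin.last m)) := by
  have hr : Rmat ρ (fun i : Fin m => I i.castSucc) (I (Fin.last m))
      = (Matrix.trace (ρ * kron fun k : Fin (m+1) =>
          if h : (k : ℕ) < m then pauli (I (Fin.castSucc ⟨(k : ℕ), h⟩))
          else pauli (I (Fin.last m)))).re := rfl
  rw [hr]
  refine congrArg Complex.re (congrArg Matrix.trace (congrArg (ρ * ·)
    (congrArg kron (funext fun k => ?_))))
  by_cases h : (k : ℕ) < m
  · rw [dif_pos h]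
    congr 1
  · rw [dif_neg h]
    have hk : k = Fin.last m := by
      apply Fin.ext
      have := k.isLt
      simp only [Fin.val_last]
      omega
    rw [hk]

lemma cs_sum {ι : Type*} [Fintype ι] (f g : ι → ℝ) :
    ∑ i, f i * g i ≤ Real.sqrt (∑ i, f i ^ 2) * Real.sqrt (∑ i, g i ^ 2) := by
  calc ∑ i, f i * g i ≤ |∑ i, f i * g i| := le_abs_self _
    _ = Real.sqrt ((∑ i, f i * g i) ^ 2) := (Real.sqrt_sq_eq_abs _).symm
    _ ≤ Real.sqrt ((∑ i, f i ^ 2) * (∑ i, g i ^ 2)) :=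
        Real.sqrt_le_sqrt (Finset.sum_mul_sq_le_sq_mul_sq Finset.univ f g)
    _ = _ := Real.sqrt_mul (by positivity) _

lemma wsum (m : ℕ) (ρ : Matrix (Fin (m+1) → Fin 2) (Fin (m+1) → Fin 2) ℂ) (c : Fin 3 → ℝ) :
    ∑ J : Fin m → Fin 3, (∑ j, c j * Rmat ρ J j) ^ 2 = c ⬝ᵥ (RtR ρ *ᵥ c) := by
  have hexp : ∀ J : Fin m → Fin 3, (∑ j, c j * Rmat ρ J j) ^ 2
      = ∑ j, ∑ j', c j * c j' * (Rmat ρ J j * Rmat ρ J j') := by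
    intro J
    rw [sq, Finset.sum_mul_sum]
    exact Finset.sum_congr rfl fun j _ => Finset.sum_congr rfl fun j' _ => by ring
  rw [Finset.sum_congr rfl fun J _ => hexp J]
  rw [Finset.sum_comm, dotProduct]
  simp only [Matrix.mulVec, dotProduct, RtR, Matrix.of_apply, Finset.sum_mul,
    Finset.mul_sum]
  refine Finset.sum_congr rfl fun j _ => ?_
  rw [Finset.sum_comm]
  exact Finset.sum_congr rfl fun j' _ => Finset.sum_congr rfl fun J _ => by ring

lemma sum_sq_prod (m : ℕ) (v : Fin m → Fin 3 → ℝ) (hv : ∀ k, ∑ i, (v k i) ^ 2 = 1) :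
    ∑ J : Fin m → Fin 3, (∏ k, v k (J k)) ^ 2 = 1 := by
  have : ∀ J : Fin m → Fin 3, (∏ k, v k (J k)) ^ 2 = ∏ k, (v k (J k)) ^ 2 := fun J =>
    (Finset.prod_pow _ _ _).symm
  rw [Finset.sum_congr rfl fun J _ => this J]
  have h2 := Finset.prod_univ_sum (t := fun _ : Fin m => (Finset.univ : Finset (Fin 3)))
    (f := fun k i => v k i ^ 2)
  rw [Fintype.piFinset_univ] at h2
  rw [← h2]
  simp [hv]

/-- For every `n`-qubit density matrix `ρ` (`n ≥ 2`) and every `n`-qubit Bell operator `B`,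
`Re Tr(ρ·B) ≤ 2√(u₁² + u₂²)`, where `u₁² ≥ u₂² ≥ u₃²` are the eigenvalues of `RᵀR`. -/
theorem bell_upper_bound (n : ℕ) (hn : 2 ≤ n)
    (ρ : Matrix (Fin n → Fin 2) (Fin n → Fin 2) ℂ)
    (hρ : ρ.PosSemidef) (htr : Matrix.trace ρ = 1)
    (u₁sq u₂sq u₃sq : ℝ) (h12 : u₂sq ≤ u₁sq) (h23 : u₃sq ≤ u₂sq)
    (hchar : (RtR ρ).charpoly =
      (X - C u₁sq) * (X - C u₂sq) * (X - C u₃sq))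
    (B : Matrix (Fin n → Fin 2) (Fin n → Fin 2) ℂ) (hB : IsBellOp n B) :
    (Matrix.trace (ρ * B)).re ≤ 2 * Real.sqrt (u₁sq + u₂sq) := by
  obtain ⟨m, rfl⟩ : ∃ m, n = m + 1 := ⟨n - 1, by omega⟩
  obtain ⟨a, a', ha, ha', hBeq⟩ := hB
  simp only [Nat.add_sub_cancel] at hBeq
  set s : Fin 3 → ℝ := fun i => a (Fin.last m) i + a' (Fin.last m) i with hs
  set t : Fin 3 → ℝ := fun i => a (Fin.last m) i - a' (Fin.last m) i with ht
  set c1 : Fin (m+1) → Fin 3 → ℝ :=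
    fun k => if (k : ℕ) = m then (fun i => a k i + a' k i) else a k with hc1def
  set c2 : Fin (m+1) → Fin 3 → ℝ :=
    fun k => if (k : ℕ) = m then (fun i => a k i - a' k i) else a' k with hc2def
  have hc1 : (fun k : Fin (m+1) =>
      if (k : ℕ) = m then opOf (a k) + opOf (a' k) else opOf (a k))
      = fun k => opOf (c1 k) := by
    funext k
    by_cases h : (k : ℕ) = m
    · simp only [hc1def, if_pos h]
      exact (opOf_add (a k) (a' k)).symm
    · simp only [hc1def, if_neg h]
  have hc2 : (fun k : Fin (m+1) =>
      if (k : ℕ) = m then opOf (a k) - opOf (a' k) else opOf (a' k))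
      = fun k => opOf (c2 k) := by
    funext k
    by_cases h : (k : ℕ) = m
    · simp only [hc2def, if_pos h]
      exact (opOf_sub (a k) (a' k)).symm
    · simp only [hc2def, if_neg h]
  rw [hc1, hc2] at hBeq
  rw [hBeq, Matrix.mul_add, Matrix.trace_add, Complex.add_re, trace_expand, trace_expand]
  -- identify the traces with entries of the R matrix
  have hS : ∀ I : Fin (m+1) → Fin 3,
      (Matrix.trace (ρ * kron fun k => pauli (I k))).re
        = Rmat ρ (fun i : Fin m => I i.castSucc) (I (Fin.last m)) := S_eq m ρ
  -- rewrite each term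
  have hterm : ∀ c : Fin (m+1) → Fin 3 → ℝ,
      (∑ I : Fin (m+1) → Fin 3, (∏ k, c k (I k))
          * (Matrix.trace (ρ * kron fun k => pauli (I k))).re)
        = ∑ J : Fin m → Fin 3, (∏ i : Fin m, c i.castSucc (J i))
            * (∑ j, c (Fin.last m) j * Rmat ρ J j) := by
    intro c
    rw [Finset.sum_congr rfl fun I _ => congrArg _ (hS I)]
    rw [sum_snoc_split m]
    refine Finset.sum_congr rfl fun J _ => ?_
    rw [Finset.mul_sum]
    refine Finset.sum_congr rfl fun j _ => ?_
    rw [Fin.prod_univ_castSucc]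
    simp only [Fin.snoc_castSucc, Fin.snoc_last]
    ring
  rw [hterm c1, hterm c2]
  have hcs1 : ∀ i : Fin m, c1 i.castSucc = a i.castSucc := by
    intro i
    simp only [hc1def]
    rw [if_neg]
    simp only [Fin.coe_castSucc]
    omega
  have hcs2 : ∀ i : Fin m, c2 i.castSucc = a' i.castSucc := by
    intro i
    simp only [hc2def]
    rw [if_neg]
    simp only [Fin.coe_castSucc]
    omega
  have hclast1 : c1 (Fin.last m) = s := by
    simp only [hc1def, Fin.val_last, if_true, eq_self_iff_true, if_pos]
    rfl
  have hclast2 : c2 (Fin.last m) = t := by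
    simp only [hc2def, Fin.val_last, if_true, eq_self_iff_true, if_pos]
    rfl
  simp only [hcs1, hcs2, hclast1, hclast2]
  -- Cauchy-Schwarz bounds for the two terms
  have key1 : (∑ J : Fin m → Fin 3, (∏ i : Fin m, a i.castSucc (J i))
        * (∑ j, s j * Rmat ρ J j)) ≤ Real.sqrt (s ⬝ᵥ (RtR ρ *ᵥ s)) := by
    have h := cs_sum (fun J : Fin m → Fin 3 => ∏ i : Fin m, a i.castSucc (J i))
      (fun J => ∑ j, s j * Rmat ρ J j)
    rw [sum_sq_prod m _ (fun i => ha i.castSucc), wsum m ρ s] at h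
    simpa using h
  have key2 : (∑ J : Fin m → Fin 3, (∏ i : Fin m, a' i.castSucc (J i))
        * (∑ j, t j * Rmat ρ J j)) ≤ Real.sqrt (t ⬝ᵥ (RtR ρ *ᵥ t)) := by
    have h := cs_sum (fun J : Fin m → Fin 3 => ∏ i : Fin m, a' i.castSucc (J i))
      (fun J => ∑ j, t j * Rmat ρ J j)
    rw [sum_sq_prod m _ (fun i => ha' i.castSucc), wsum m ρ t] at h
    simpa using h
  -- apply the spectral bound
  have hsym : (RtR ρ).IsHermitian := by
    unfold Matrix.IsHermitian
    rw [Matrix.conjTranspose_eq_transpose_of_trivial]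
    ext j j'
    simp only [RtR, Matrix.transpose_apply, Matrix.of_apply]
    exact Finset.sum_congr rfl fun I _ => mul_comm _ _
  have hpsd : ∀ c : Fin 3 → ℝ, 0 ≤ c ⬝ᵥ (RtR ρ *ᵥ c) := by
    intro c
    rw [← wsum m ρ c]
    positivity
  have hst : s ⬝ᵥ t = 0 := by
    rw [dotProduct]
    have h1 : ∀ i, s i * t i = (a (Fin.last m) i) ^ 2 - (a' (Fin.last m) i) ^ 2 := by
      intro i
      simp only [hs, ht]
      ring
    rw [Finset.sum_congr rfl fun i _ => h1 i, Finset.sum_sub_distrib,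
      ha (Fin.last m), ha' (Fin.last m), sub_self]
  have hnorm4 : s ⬝ᵥ s + t ⬝ᵥ t = 4 := by
    rw [dotProduct, dotProduct, ← Finset.sum_add_distrib]
    have h1 : ∀ i, s i * s i + t i * t i
        = 2 * (a (Fin.last m) i) ^ 2 + 2 * (a' (Fin.last m) i) ^ 2 := by
      intro i
      simp only [hs, ht]
      ring
    rw [Finset.sum_congr rfl fun i _ => h1 i, Finset.sum_add_distrib,
      ← Finset.mul_sum, ← Finset.mul_sum, ha (Fin.last m), ha' (Fin.last m)]
    norm_num
  have hkey := key (RtR ρ) hsym hpsd u₁sq u₂sq u₃sq h12 h23 hchar s t hst hnorm4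
  calc (∑ J : Fin m → Fin 3, (∏ i : Fin m, a i.castSucc (J i)) * (∑ j, s j * Rmat ρ J j))
        + (∑ J : Fin m → Fin 3, (∏ i : Fin m, a' i.castSucc (J i)) * (∑ j, t j * Rmat ρ J j))
      ≤ Real.sqrt (s ⬝ᵥ (RtR ρ *ᵥ s)) + Real.sqrt (t ⬝ᵥ (RtR ρ *ᵥ t)) := add_le_add key1 key2
    _ ≤ 2 * Real.sqrt (u₁sq + u₂sq) := hkey
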